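/- Let 1 ≤ p < ∞ and let P be a Dirichlet polynomial. Let T(z) = 1/2 + (1−z)/(1+z) and ψ(s) = T(2^{−s}). Then (1/(2T)) ∫_{−T}^{T} |P(ψ(it))|^p dt converges, as T → ∞, to (1/π) ∫_ℝ |P(1/2 + it)|^p dt/(1 + t²). -/

import Mathlib

open MeasureTheory Filter

/-- The Dirichlet polynomial `P(s) = ∑_{n=1}^N a_n n^{-s}`. -/
noncomputable def dPoly (N : ℕ) (a : ℕ → ℂ) (s : ℂ) : ℂ :=
  ∑ n ∈ Finset.Icc 1 N, a n * (n : ℂ) ^ (-s)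

/-- `ψ(s) = T(2^{-s})` where `T(z) = 1/2 + (1-z)/(1+z)`. -/
noncomputable def psiMap (s : ℂ) : ℂ :=
  1/2 + (1 - (2 : ℂ) ^ (-s)) / (1 + (2 : ℂ) ^ (-s))

theorem psi_eq (t : ℝ) : psiMap (Complex.I * t) =
    1/2 + (Real.tan (t * Real.log 2 / 2) : ℂ) * Complex.I := by
  have h2 : (2:ℂ) ≠ 0 := by norm_num
  set L := Real.log 2 with hL
  set θ := t * L / 2 with hθ
  set c := Real.cos θ with hc
  set s := Real.sin θ with hs
  have hw : (2:ℂ) ^ (-(Complex.I * t)) =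
      ((Real.cos (2*θ) : ℝ) : ℂ) - ((Real.sin (2*θ) :ℝ) :ℂ) * Complex.I := by
    rw [Complex.cpow_def_of_ne_zero h2]
    have hlog : Complex.log 2 = (L : ℂ) := by
      rw [hL, show (2:ℂ) = ((2:ℝ):ℂ) by norm_num,
        ← Complex.ofReal_log (by norm_num : (0:ℝ) ≤ 2)]
    rw [hlog]
    have : (L:ℂ) * -(Complex.I * t) = (-(2*θ) : ℝ) * Complex.I := by
      push_cast [hθ]; ring
    rw [this, Complex.exp_mul_I]
    push_cast
    rw [Complex.cos_neg, Complex.sin_neg]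
    ring
  have hpy : s^2 + c^2 = 1 := Real.sin_sq_add_cos_sq θ
  have hcos2 : Real.cos (2*θ) = 1 - 2*s^2 := by
    rw [Real.cos_two_mul]; linarith
  have hsin2 : Real.sin (2*θ) = 2*s*c := by rw [Real.sin_two_mul]
  have h1w : 1 - (2:ℂ) ^ (-(Complex.I * t)) = 2*s*((s:ℂ) + c*Complex.I) := by
    rw [hw, hcos2, hsin2]; push_cast; ring
  have h2w : 1 + (2:ℂ) ^ (-(Complex.I * t)) = 2*c*((c:ℂ) - s*Complex.I) := by
    rw [hw, hcos2, hsin2]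
    have h' : (1:ℝ) - 2*s^2 = 2*c^2 - 1 := by linarith
    rw [h']; push_cast; ring
  rw [psiMap, h1w, h2w]
  rcases eq_or_ne c 0 with h0 | h0
  · rw [Real.tan_eq_sin_div_cos, ← hc, ← hs, h0]
    simp [h0]
  · have hcs : ((c:ℂ) - s*Complex.I) ≠ 0 := by
      intro h
      have := congrArg Complex.re h
      simp at this
      exact h0 this
    have hcC : (c:ℂ) ≠ 0 := by exact_mod_cast h0
    rw [Real.tan_eq_sin_div_cos, ← hc, ← hs]
    have key : (s:ℂ) + c*Complex.I = Complex.I * ((c:ℂ) - s*Complex.I) := by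
      have : Complex.I * ((c:ℂ) - s*Complex.I) = (c:ℂ)*Complex.I - s*(Complex.I*Complex.I) := by
        ring
      rw [this, Complex.I_mul_I]; ring
    rw [key]
    push_cast
    field_simp

/-- Average of a periodic function over `[-T, T]` converges to its mean. -/
theorem avg_periodic (g : ℝ → ℝ) (τ : ℝ) (hτ : 0 < τ) (hg : Function.Periodic g τ)
    (h_int : ∀ a b : ℝ, IntervalIntegrable g volume a b) :
    Tendsto (fun T : ℝ => (1/(2*T)) * ∫ x in (-T)..T, g x) atTop
      (nhds ((1/τ) * ∫ x in (0:ℝ)..τ, g x)) := by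
  set M : ℝ := ∫ x in (0:ℝ)..τ, g x with hM
  set X : ℝ := sInf ((fun t => ∫ x in (0:ℝ)..t, g x) '' Set.Icc 0 τ) with hX
  set Y : ℝ := sSup ((fun t => ∫ x in (0:ℝ)..t, g x) '' Set.Icc 0 τ) with hY
  have lower : ∀ t : ℝ, X + (⌊t/τ⌋:ℝ) * M ≤ ∫ x in (0:ℝ)..t, g x := fun t => by
    have := hg.sInf_add_zsmul_le_integral_of_pos (h_int 0 τ) hτ t
    simpa [zsmul_eq_mul] using this
  have upper : ∀ t : ℝ, (∫ x in (0:ℝ)..t, g x) ≤ Y + (⌊t/τ⌋:ℝ) * M := fun t => by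
    have := hg.integral_le_sSup_add_zsmul_of_pos (h_int 0 τ) hτ t
    simpa [zsmul_eq_mul] using this
  have hI : ∀ T : ℝ, (∫ x in (-T)..T, g x)
      = (∫ x in (0:ℝ)..T, g x) - ∫ x in (0:ℝ)..(-T), g x := fun T => by
    have h1 := intervalIntegral.integral_add_adjacent_intervals (h_int (-T) 0) (h_int 0 T)
    rw [← h1, intervalIntegral.integral_symm]
    ring
  have hinv : Tendsto (fun T:ℝ => 1/(2*T)) atTop (nhds 0) := by
    have h2T : Tendsto (fun T:ℝ => 2*T) atTop atTop :=
      (tendsto_id (α := ℝ)).const_mul_atTop two_pos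
    exact Tendsto.congr (fun T => by simp [Pi.inv_apply, one_div]) h2T.inv_tendsto_atTop
  have hn : Tendsto (fun T:ℝ => (((⌊T/τ⌋:ℝ)) - ((⌊(-T)/τ⌋:ℝ)))/(2*T)) atTop (nhds (1/τ)) := by
    have hlow : Tendsto (fun T:ℝ => 1/τ - 1/(2*T)) atTop (nhds (1/τ)) := by
      simpa using tendsto_const_nhds.sub hinv
    have hup : Tendsto (fun T:ℝ => 1/τ + 1/(2*T)) atTop (nhds (1/τ)) := by
      simpa using tendsto_const_nhds.add hinv
    apply tendsto_of_tendsto_of_tendsto_of_le_of_le' hlow hup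
    · filter_upwards [eventually_gt_atTop 0] with T hT
      have h1 : T/τ - 1 ≤ (⌊T/τ⌋:ℝ) := by linarith [Int.sub_one_lt_floor (T/τ)]
      have h2 : ((⌊(-T)/τ⌋:ℝ)) ≤ -(T/τ) := by
        have := Int.floor_le ((-T)/τ)
        have hnd : (-T)/τ = -(T/τ) := by ring
        linarith [hnd ▸ this]
      have hT2 : (0:ℝ) < 2*T := by linarith
      have hnum : (2*(T/τ) - 1) ≤ ((⌊T/τ⌋:ℝ)) - ((⌊(-T)/τ⌋:ℝ)) := by linarith
      calc 1/τ - 1/(2*T) = (2*(T/τ) - 1)/(2*T) := by field_simp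
        _ ≤ _ := by gcongr
    · filter_upwards [eventually_gt_atTop 0] with T hT
      have h1 : (⌊T/τ⌋:ℝ) ≤ T/τ := Int.floor_le _
      have h2 : -(T/τ) - 1 ≤ ((⌊(-T)/τ⌋:ℝ)) := by
        have := Int.sub_one_lt_floor ((-T)/τ)
        have hnd : (-T)/τ = -(T/τ) := by ring
        linarith [hnd ▸ this]
      have hT2 : (0:ℝ) < 2*T := by linarith
      have hnum : ((⌊T/τ⌋:ℝ)) - ((⌊(-T)/τ⌋:ℝ)) ≤ 2*(T/τ) + 1 := by linarith
      calc (((⌊T/τ⌋:ℝ)) - ((⌊(-T)/τ⌋:ℝ)))/(2*T) ≤ (2*(T/τ) + 1)/(2*T) := by gcongr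
        _ = 1/τ + 1/(2*T) := by field_simp
  have l1 : Tendsto (fun T:ℝ => (1/(2*T))*(X - Y)
      + ((((⌊T/τ⌋:ℝ)) - ((⌊(-T)/τ⌋:ℝ)))/(2*T))*M) atTop (nhds ((1/τ)*M)) := by
    have := (hinv.mul_const (X - Y)).add (hn.mul_const M)
    simpa using this
  have u1 : Tendsto (fun T:ℝ => (1/(2*T))*(Y - X)
      + ((((⌊T/τ⌋:ℝ)) - ((⌊(-T)/τ⌋:ℝ)))/(2*T))*M) atTop (nhds ((1/τ)*M)) := by
    have := (hinv.mul_const (Y - X)).add (hn.mul_const M)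
    simpa using this
  apply tendsto_of_tendsto_of_tendsto_of_le_of_le' l1 u1
  · filter_upwards [eventually_gt_atTop 0] with T hT
    have h0 : (0:ℝ) ≤ 1/(2*T) := by positivity
    have b1 : (X - Y) + (((⌊T/τ⌋:ℝ)) - ((⌊(-T)/τ⌋:ℝ)))*M ≤ ∫ x in (-T)..T, g x := by
      rw [hI T]; linarith [lower T, upper (-T)]
    calc (1/(2*T))*(X - Y) + ((((⌊T/τ⌋:ℝ)) - ((⌊(-T)/τ⌋:ℝ)))/(2*T))*M
        = (1/(2*T)) * ((X - Y) + (((⌊T/τ⌋:ℝ)) - ((⌊(-T)/τ⌋:ℝ)))*M) := by ring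
      _ ≤ (1/(2*T)) * ∫ x in (-T)..T, g x := mul_le_mul_of_nonneg_left b1 h0
  · filter_upwards [eventually_gt_atTop 0] with T hT
    have h0 : (0:ℝ) ≤ 1/(2*T) := by positivity
    have b1 : (∫ x in (-T)..T, g x) ≤ (Y - X) + (((⌊T/τ⌋:ℝ)) - ((⌊(-T)/τ⌋:ℝ)))*M := by
      rw [hI T]; linarith [upper T, lower (-T)]
    calc (1/(2*T)) * ∫ x in (-T)..T, g x
        ≤ (1/(2*T)) * ((Y - X) + (((⌊T/τ⌋:ℝ)) - ((⌊(-T)/τ⌋:ℝ)))*M) :=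
          mul_le_mul_of_nonneg_left b1 h0
      _ = (1/(2*T))*(Y - X) + ((((⌊T/τ⌋:ℝ)) - ((⌊(-T)/τ⌋:ℝ)))/(2*T))*M := by ring

theorem stmt8 (p : ℝ) (hp : 1 ≤ p) (N : ℕ) (a : ℕ → ℂ) :
    Tendsto (fun T : ℝ =>
        (1 / (2 * T)) * ∫ t in Set.Ioc (-T) T, ‖dPoly N a (psiMap (Complex.I * (t : ℂ)))‖ ^ p)
      atTop
      (nhds ((1 / Real.pi) *
        ∫ t : ℝ, ‖dPoly N a ((1/2 : ℂ) + (t : ℂ) * Complex.I)‖ ^ p / (1 + t ^ 2))) := by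
  have hp0 : (0:ℝ) ≤ p := zero_le_one.trans hp
  set L : ℝ := Real.log 2 with hLdef
  have hL : 0 < L := Real.log_pos one_lt_two
  set g0 : ℝ → ℝ := fun u => ‖dPoly N a ((1/2 : ℂ) + (u : ℂ) * Complex.I)‖ ^ p with hg0def
  set G : ℝ → ℝ := fun t => g0 (Real.tan (t * L / 2)) with hGdef
  set τ : ℝ := 2 * Real.pi / L with hτdef
  have hπ : (0:ℝ) < Real.pi := Real.pi_pos
  have hτ : 0 < τ := by positivity
  -- the integrand equals G
  have hGF : ∀ t : ℝ, ‖dPoly N a (psiMap (Complex.I * (t : ℂ)))‖ ^ p = G t := fun t => by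
    rw [psi_eq t]
  -- continuity of g0
  have hcontP : Continuous fun u : ℝ => dPoly N a ((1/2 : ℂ) + (u : ℂ) * Complex.I) := by
    unfold dPoly
    apply continuous_finset_sum
    intro n hn
    have hn0 : (n:ℂ) ≠ 0 := by
      have h1 : 1 ≤ n := (Finset.mem_Icc.mp hn).1
      exact_mod_cast Nat.cast_ne_zero.mpr (by omega)
    have hin : Continuous fun u : ℝ => -((1/2 : ℂ) + (u : ℂ) * Complex.I) :=
      (continuous_const.add (Complex.continuous_ofReal.mul continuous_const)).neg
    exact continuous_const.mul (hin.const_cpow (Or.inl hn0))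
  have hg0cont : Continuous g0 := hcontP.norm.rpow_const (fun u => Or.inr hp0)
  -- bound for g0
  set C : ℝ := ∑ n ∈ Finset.Icc 1 N, ‖a n‖ * (n:ℝ) ^ (-(1/2) : ℝ) with hCdef
  have hC0 : 0 ≤ C := Finset.sum_nonneg fun n _ => by positivity
  have hg0bound : ∀ u : ℝ, g0 u ≤ C ^ p := fun u => by
    apply Real.rpow_le_rpow (norm_nonneg _) _ hp0
    refine (norm_sum_le _ _).trans ?_
    apply Finset.sum_le_sum
    intro n hn
    have hn1 : 1 ≤ n := (Finset.mem_Icc.mp hn).1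
    have hnpos : (0:ℝ) < (n:ℝ) := by exact_mod_cast hn1
    rw [norm_mul]
    gcongr
    rw [show ((n:ℂ)) = (((n:ℝ):ℂ)) by push_cast; ring,
      Complex.norm_cpow_eq_rpow_re_of_pos hnpos]
    apply le_of_eq
    congr 1
    simp [Complex.add_re, Complex.neg_re, Complex.mul_re]
  have hGnonneg : ∀ t, 0 ≤ G t := fun t => Real.rpow_nonneg (norm_nonneg _) _
  -- measurability of G
  have hmeastan : Measurable Real.tan := by
    have : Real.tan = fun x => Real.sin x / Real.cos x := funext Real.tan_eq_sin_div_cos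
    rw [this]
    exact Real.continuous_sin.measurable.div Real.continuous_cos.measurable
  have hGmeas : Measurable G :=
    hg0cont.measurable.comp (hmeastan.comp ((measurable_id.mul_const L).div_const 2))
  -- interval integrability of G
  have h_int : ∀ a b : ℝ, IntervalIntegrable G volume a b := fun x y => by
    apply (intervalIntegrable_const (c := C ^ p)).mono_fun'
      (hGmeas.aestronglyMeasurable.restrict)
    filter_upwards with t
    rw [Real.norm_eq_abs, abs_of_nonneg (hGnonneg t)]
    exact hg0bound _
  -- periodicity of G
  have hper : Function.Periodic G τ := fun t => by
    have harg : (t + τ) * L / 2 = t * L / 2 + Real.pi := by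
      rw [hτdef]; field_simp
    simp only [hGdef, harg, Real.tan_periodic (t * L / 2)]
  -- apply the averaging lemma
  have havg := avg_periodic G τ hτ hper h_int
  -- identify the limit value
  have hval : (1/τ) * (∫ x in (0:ℝ)..τ, G x)
      = (1 / Real.pi) * ∫ t : ℝ, g0 t / (1 + t ^ 2) := by
    -- symmetric interval
    have hsym : (∫ x in (0:ℝ)..τ, G x) = ∫ x in (-(τ/2))..(τ/2), G x := by
      have e : -(τ/2) + τ = τ/2 := by ring
      have h := hper.intervalIntegral_add_eq (-(τ/2)) 0
      rw [e, zero_add] at h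
      exact h.symm
    have hscale : (∫ x in (-(τ/2))..(τ/2), G x)
        = (L/2)⁻¹ • ∫ x in (-(Real.pi/2))..(Real.pi/2), g0 (Real.tan x) := by
      have hc : (L/2 : ℝ) ≠ 0 := by positivity
      have h := intervalIntegral.integral_comp_mul_right
        (a := -(τ/2)) (b := τ/2) (fun x => g0 (Real.tan x)) hc
      have e1 : -(τ/2)*(L/2) = -(Real.pi/2) := by
        rw [hτdef]; field_simp
      have e2 : (τ/2)*(L/2) = Real.pi/2 := by
        rw [hτdef]; field_simp
      rw [e1, e2] at h
      rw [← h]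
      apply intervalIntegral.integral_congr
      intro x _
      simp only [hGdef, mul_div_assoc]
    have hIoo : (∫ x in (-(Real.pi/2))..(Real.pi/2), g0 (Real.tan x))
        = ∫ x in Set.Ioo (-(Real.pi/2)) (Real.pi/2), g0 (Real.tan x) := by
      rw [intervalIntegral.integral_of_le (by linarith),
        ← MeasureTheory.integral_Ioc_eq_integral_Ioo]
    have hcov : (∫ t : ℝ, g0 t / (1 + t ^ 2))
        = ∫ x in Set.Ioo (-(Real.pi/2)) (Real.pi/2), g0 (Real.tan x) := by
      have hderiv : ∀ x ∈ Set.Ioo (-(Real.pi/2)) (Real.pi/2),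
          HasDerivWithinAt Real.tan (1 / Real.cos x ^ 2)
            (Set.Ioo (-(Real.pi/2)) (Real.pi/2)) x := by
        intro x hx
        have hcos : Real.cos x ≠ 0 := (Real.cos_pos_of_mem_Ioo hx).ne'
        exact (Real.hasDerivAt_tan hcos).hasDerivWithinAt
      have h := MeasureTheory.integral_image_eq_integral_abs_deriv_smul measurableSet_Ioo
        hderiv Real.injOn_tan (fun u => g0 u / (1 + u ^ 2))
      rw [Real.image_tan_Ioo, MeasureTheory.setIntegral_univ] at h
      rw [h]
      apply MeasureTheory.setIntegral_congr_fun measurableSet_Ioo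
      intro x hx
      have hcos : Real.cos x ≠ 0 := (Real.cos_pos_of_mem_Ioo hx).ne'
      have htaninv : (1 + Real.tan x ^ 2)⁻¹ = Real.cos x ^ 2 :=
        Real.inv_one_add_tan_sq hcos
      have hpos : (0:ℝ) < Real.cos x ^ 2 := by positivity
      have h1 : (1:ℝ) + Real.tan x ^ 2 = (Real.cos x ^ 2)⁻¹ := by
        rw [← htaninv, inv_inv]
      simp only [smul_eq_mul]
      rw [abs_of_pos (by positivity : (0:ℝ) < 1 / Real.cos x ^ 2), h1]
      field_simp
    rw [hsym, hscale, hIoo, ← hcov, smul_eq_mul, hτdef]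
    have hπ0 : Real.pi ≠ 0 := hπ.ne'
    have hL0 : L ≠ 0 := hL.ne'
    field_simp
  -- assemble
  have heq : (fun T : ℝ => (1/(2*T)) * ∫ x in (-T)..T, G x) =ᶠ[atTop]
      (fun T : ℝ =>
        (1 / (2 * T)) * ∫ t in Set.Ioc (-T) T, ‖dPoly N a (psiMap (Complex.I * (t : ℂ)))‖ ^ p) := by
    filter_upwards [eventually_ge_atTop (0:ℝ)] with T hT
    rw [intervalIntegral.integral_of_le (by linarith : -T ≤ T)]
    have : (fun t : ℝ => ‖dPoly N a (psiMap (Complex.I * (t : ℂ)))‖ ^ p) = G :=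
      funext fun t => hGF t
    rw [this]
  have hfinal := havg.congr' heq
  rw [hval] at hfinal
  exact hfinal
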